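/- Let s be a positive integer, let r_1, …, r_s be positive integers, and let n_1 < n_2 < ⋯ < n_s be real numbers with n_1 ≥ 0 and, in case s ≥ 2, n_{s-1} ≤ n_s − 1. Set f(x) = (x − n_1)^{r_1} ⋯ (x − n_s)^{r_s}, and let x_0 be the unique real root of f(x) − 1 in (n_s, n_s + 1]. Then every complex number z with f(z) = 1 satisfies |z| ≤ x_0. Consequently ρ(f(x) − 1) = x_0, i.e. the maximum modulus of the complex roots of f(x) − 1 equals x_0. -/

import Mathlib

open Polynomial

/-- `rho p` is the maximum (supremum) of the moduli of the complex roots of the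
real polynomial `p`. -/
noncomputable def rho (p : Polynomial ℝ) : ℝ :=
  sSup {t : ℝ | ∃ z : ℂ, (Polynomial.aeval z) p = 0 ∧ ‖z‖ = t}

/-- With `f(x) = (x - n₁)^{r₁} ⋯ (x - n_s)^{r_s}` as before and `x₀`
the unique real root of `f(x) - 1` in `(n_s, n_s + 1]`, every complex `z` with
`f(z) = 1` satisfies `|z| ≤ x₀`; consequently `ρ(f - 1) = x₀`. -/
theorem statement1 (s : ℕ) (hs : 0 < s) (r : Fin s → ℕ) (hr : ∀ i, 0 < r i)
    (n : Fin s → ℝ) (hmono : StrictMono n) (hn0 : 0 ≤ n ⟨0, hs⟩)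
    (hgap : ∀ _ : 2 ≤ s, n ⟨s - 2, by omega⟩ ≤ n ⟨s - 1, by omega⟩ - 1)
    (x₀ : ℝ) (hx₀ : x₀ ∈ Set.Ioc (n ⟨s - 1, by omega⟩) (n ⟨s - 1, by omega⟩ + 1))
    (hroot : ∏ i : Fin s, (x₀ - n i) ^ r i = 1) :
    (∀ z : ℂ, ∏ i : Fin s, (z - (n i : ℂ)) ^ r i = 1 → ‖z‖ ≤ x₀) ∧
      rho (∏ i : Fin s, (X - C (n i)) ^ r i - 1) = x₀ := by
  haveI : Nonempty (Fin s) := ⟨⟨0, hs⟩⟩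
  have hns : ∀ i : Fin s, n i ≤ n ⟨s - 1, by omega⟩ := fun i =>
    hmono.monotone (by rw [Fin.le_def]; simp; omega)
  have hni0 : ∀ i : Fin s, 0 ≤ n i := fun i =>
    hn0.trans (hmono.monotone (by rw [Fin.le_def]; simp))
  have hx0pos : ∀ i : Fin s, 0 < x₀ - n i := fun i => by
    have h1 := hns i; have h2 := hx₀.1; simp only [sub_pos]; linarith
  have key : ∀ z : ℂ, ∏ i : Fin s, (z - (n i : ℂ)) ^ r i = 1 → ‖z‖ ≤ x₀ := by
    intro z hz
    by_contra h
    push_neg at h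
    have h1 : (1:ℝ) < ∏ i : Fin s, ‖z - (n i : ℂ)‖ ^ r i := by
      calc (1:ℝ) = ∏ i : Fin s, (x₀ - n i) ^ r i := hroot.symm
        _ < ∏ i : Fin s, ‖z - (n i : ℂ)‖ ^ r i := by
          apply Finset.prod_lt_prod_of_nonempty
          · intro i _; exact pow_pos (hx0pos i) _
          · intro i _
            apply pow_lt_pow_left₀ _ (hx0pos i).le (hr i).ne'
            have hle : ‖z‖ - ‖((n i : ℂ))‖ ≤
                ‖z - (n i : ℂ)‖ := norm_sub_norm_le _ _
            have : ‖((n i : ℂ))‖ = n i := by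
              rw [Complex.norm_of_nonneg (hni0 i)]
            rw [this] at hle
            linarith
          · exact Finset.univ_nonempty
    have h2 : ∏ i : Fin s, ‖z - (n i : ℂ)‖ ^ r i = 1 := by
      have := congrArg (‖·‖) hz
      simpa [norm_prod, norm_pow] using this
    rw [h2] at h1
    exact lt_irrefl _ h1
  refine ⟨key, ?_⟩
  have hx0nonneg : 0 ≤ x₀ := le_trans (hni0 _) hx₀.1.le
  have haev : ∀ z : ℂ, (Polynomial.aeval z) (∏ i : Fin s, (X - C (n i)) ^ r i - 1) =
      ∏ i : Fin s, (z - (n i : ℂ)) ^ r i - 1 := by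
    intro z
    simp [map_prod, map_pow, map_sub]
  have hmem : x₀ ∈ {t : ℝ | ∃ z : ℂ, (Polynomial.aeval z)
      (∏ i : Fin s, (X - C (n i)) ^ r i - 1) = 0 ∧ ‖z‖ = t} := by
    refine ⟨(x₀ : ℂ), ?_, by rw [Complex.norm_of_nonneg hx0nonneg]⟩
    rw [haev, sub_eq_zero]
    have : ((∏ i : Fin s, (x₀ - n i) ^ r i : ℝ) : ℂ) = 1 := by rw [hroot]; norm_num
    rw [← this]; push_cast; ring_nf
  have hub : ∀ t ∈ {t : ℝ | ∃ z : ℂ, (Polynomial.aeval z)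
      (∏ i : Fin s, (X - C (n i)) ^ r i - 1) = 0 ∧ ‖z‖ = t}, t ≤ x₀ := by
    rintro t ⟨z, hz, rfl⟩
    rw [haev, sub_eq_zero] at hz
    exact key z hz
  exact le_antisymm (csSup_le ⟨x₀, hmem⟩ hub) (le_csSup ⟨x₀, hub⟩ hmem)
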